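/- Consider an uncertain optimization problem with decision space ℝ^n, scenario space ℝ^M, a convex set X ⊆ ℝ^n, constraints of the form F(x, ξ) = G(x) − b(ξ) where G : ℝ^n → ℝ^m has convex component functions and b : ℝ^M → ℝ^m has concave component functions, an objective f : ℝ^n × ℝ^M → ℝ that is jointly quasiconvex in (y, ξ), and a metric d on ℝ^n such that for every x the function y ↦ d(x, y) is quasiconvex. Let U' = {ξ¹, …, ξ^N} ⊆ ℝ^M be finite and U = conv(U') its convex hull. Then a point x ∈ X is recoverable-robust with respect to U if and only if it is recoverable-robust with respect to U'. -/
import Mathlib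


/-! **Statement 7.** For constraints `F(x, ξ) = G(x) − b(ξ)` with convex `G` and concave `b`
(uncertainty only in the right-hand side), a jointly quasiconvex objective, and recovery costs
quasiconvex in the second argument, the recoverable-robust solutions with respect to the
polytope `U = conv{ξ¹, …, ξ^N}` coincide with those with respect to `U' = {ξ¹, …, ξ^N}`. -/

section

variable {n mM m : ℕ}

/-- `(x, y)` is feasible for `Rec(U)` with right-hand-side constraints `G(·) − b(ξ) ≤ 0`. -/
def RecFeasible (X : Set (Fin n → ℝ)) (G : (Fin n → ℝ) → Fin m → ℝ) (b : (Fin mM → ℝ) → Fin m → ℝ)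
    (U : Set (Fin mM → ℝ)) (x : Fin n → ℝ) (y : (Fin mM → ℝ) → (Fin n → ℝ)) : Prop :=
  x ∈ X ∧ ∀ ξ ∈ U, y ξ ∈ X ∧ ∀ i, G (y ξ) i - b ξ i ≤ 0

/-- Worst-case objective value, in the extended reals. -/
noncomputable def fObj (f : (Fin n → ℝ) → (Fin mM → ℝ) → ℝ) (U : Set (Fin mM → ℝ))
    (y : (Fin mM → ℝ) → (Fin n → ℝ)) : EReal :=
  ⨆ ξ ∈ U, (f (y ξ) ξ : EReal)

/-- Worst-case recovery cost w.r.t. the metric `d`, in the extended reals. -/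
noncomputable def rObj (d : (Fin n → ℝ) → (Fin n → ℝ) → ℝ) (U : Set (Fin mM → ℝ))
    (x : Fin n → ℝ) (y : (Fin mM → ℝ) → (Fin n → ℝ)) : EReal :=
  ⨆ ξ ∈ U, (d x (y ξ) : EReal)

/-- Pareto efficiency for `Rec(U)`. -/
def ParetoEfficient (X : Set (Fin n → ℝ)) (f : (Fin n → ℝ) → (Fin mM → ℝ) → ℝ)
    (G : (Fin n → ℝ) → Fin m → ℝ) (b : (Fin mM → ℝ) → Fin m → ℝ)
    (d : (Fin n → ℝ) → (Fin n → ℝ) → ℝ)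
    (U : Set (Fin mM → ℝ)) (x : Fin n → ℝ) (y : (Fin mM → ℝ) → (Fin n → ℝ)) : Prop :=
  RecFeasible X G b U x y ∧
    ¬ ∃ x' y', RecFeasible X G b U x' y' ∧
      fObj f U y' ≤ fObj f U y ∧ rObj d U x' y' ≤ rObj d U x y ∧
      (fObj f U y' < fObj f U y ∨ rObj d U x' y' < rObj d U x y)

/-- `x` is recoverable-robust with respect to `U`. -/
def RecoverableRobust (X : Set (Fin n → ℝ)) (f : (Fin n → ℝ) → (Fin mM → ℝ) → ℝ)
    (G : (Fin n → ℝ) → Fin m → ℝ) (b : (Fin mM → ℝ) → Fin m → ℝ)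
    (d : (Fin n → ℝ) → (Fin n → ℝ) → ℝ)
    (U : Set (Fin mM → ℝ)) (x : Fin n → ℝ) : Prop :=
  ∃ y, ParetoEfficient X f G b d U x y

/-- Pointwise extension: a recovery point for any scenario in the convex hull. -/
lemma pointwise_ext (X : Set (Fin n → ℝ)) (hX : Convex ℝ X)
    (G : (Fin n → ℝ) → Fin m → ℝ) (b : (Fin mM → ℝ) → Fin m → ℝ)
    (hG : ∀ i, ConvexOn ℝ Set.univ (fun x => G x i))
    (hb : ∀ i, ConcaveOn ℝ Set.univ (fun ξ => b ξ i))
    (f : (Fin n → ℝ) → (Fin mM → ℝ) → ℝ)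
    (hf : QuasiconvexOn ℝ Set.univ (fun p : (Fin n → ℝ) × (Fin mM → ℝ) => f p.1 p.2))
    (d : (Fin n → ℝ) → (Fin n → ℝ) → ℝ)
    (hd_qc : ∀ x, QuasiconvexOn ℝ Set.univ (d x))
    {N : ℕ} (ξ : Fin N → (Fin mM → ℝ))
    (x : Fin n → ℝ) (y' : (Fin mM → ℝ) → Fin n → ℝ)
    (hfeas : ∀ ζ ∈ Set.range ξ, y' ζ ∈ X ∧ ∀ i, G (y' ζ) i - b ζ i ≤ 0)
    (ζ : Fin mM → ℝ) (hζ : ζ ∈ convexHull ℝ (Set.range ξ)) :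
    ∃ v : Fin n → ℝ, v ∈ X ∧ (∀ i, G v i - b ζ i ≤ 0) ∧
      ((f v ζ : EReal) ≤ ⨆ ζ' ∈ Set.range ξ, (f (y' ζ') ζ' : EReal)) ∧
      ((d x v : EReal) ≤ ⨆ ζ' ∈ Set.range ξ, (d x (y' ζ') : EReal)) := by
  rw [convexHull_eq] at hζ
  obtain ⟨ι, t, w, z, hw₀, hw₁, hz, hcm⟩ := hζ
  rw [Finset.centerMass_eq_of_sum_1 _ _ hw₁] at hcm
  have ht : t.Nonempty := by
    rcases t.eq_empty_or_nonempty with h | h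
    · rw [h] at hw₁; simp at hw₁
    · exact h
  set v : Fin n → ℝ := ∑ i ∈ t, w i • y' (z i) with hv
  have hmemX : ∀ i ∈ t, y' (z i) ∈ X := fun i hi => (hfeas _ (hz i hi)).1
  refine ⟨v, hX.sum_mem hw₀ hw₁ hmemX, ?_, ?_, ?_⟩
  · -- constraints
    intro j
    have h1 : G v j ≤ ∑ i ∈ t, w i • G (y' (z i)) j :=
      (hG j).map_sum_le hw₀ hw₁ (fun i _ => Set.mem_univ _)
    have h2 : ∑ i ∈ t, w i • G (y' (z i)) j ≤ ∑ i ∈ t, w i • b (z i) j := by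
      refine Finset.sum_le_sum fun i hi => ?_
      have h := (hfeas _ (hz i hi)).2 j
      have := hw₀ i hi
      simp only [smul_eq_mul]
      nlinarith
    have h3 : ∑ i ∈ t, w i • b (z i) j ≤ b ζ j := by
      rw [← hcm]
      exact (hb j).le_map_sum hw₀ hw₁ (fun i _ => Set.mem_univ _)
    linarith
  · -- objective bound
    set r := t.sup' ht (fun i => f (y' (z i)) (z i)) with hr
    have hsum : (∑ i ∈ t, w i • ((y' (z i), z i) : (Fin n → ℝ) × (Fin mM → ℝ))) = (v, ζ) := by
      apply Prod.ext <;> simp [Prod.fst_sum, Prod.snd_sum, hv, hcm]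
    have hmem : ((v, ζ) : (Fin n → ℝ) × (Fin mM → ℝ)) ∈
        Set.univ ∩ {p : (Fin n → ℝ) × (Fin mM → ℝ) | f p.1 p.2 ≤ r} := by
      rw [← hsum]
      refine (hf r).sum_mem hw₀ hw₁ fun i hi => ⟨Set.mem_univ _, ?_⟩
      exact Finset.le_sup' (fun i => f (y' (z i)) (z i)) hi
    obtain ⟨i0, hi0, hri0⟩ := t.exists_mem_eq_sup' ht (fun i => f (y' (z i)) (z i))
    have h1 : f v ζ ≤ f (y' (z i0)) (z i0) := by
      have := hmem.2
      simp only [Set.mem_setOf_eq] at this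
      rw [← hri0]; exact this
    calc (f v ζ : EReal) ≤ (f (y' (z i0)) (z i0) : EReal) := by exact_mod_cast h1
      _ ≤ _ := le_iSup₂ (f := fun ζ' (_ : ζ' ∈ Set.range ξ) => (f (y' ζ') ζ' : EReal))
            (z i0) (hz i0 hi0)
  · -- recovery cost bound
    set r := t.sup' ht (fun i => d x (y' (z i))) with hr
    have hmem : v ∈ Set.univ ∩ {p | d x p ≤ r} := by
      rw [hv]
      refine (hd_qc x r).sum_mem hw₀ hw₁ fun i hi => ⟨Set.mem_univ _, ?_⟩
      exact Finset.le_sup' (fun i => d x (y' (z i))) hi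
    obtain ⟨i0, hi0, hri0⟩ := t.exists_mem_eq_sup' ht (fun i => d x (y' (z i)))
    have h1 : d x v ≤ d x (y' (z i0)) := by
      have := hmem.2
      simp only [Set.mem_setOf_eq] at this
      rw [← hri0]; exact this
    calc (d x v : EReal) ≤ (d x (y' (z i0)) : EReal) := by exact_mod_cast h1
      _ ≤ _ := le_iSup₂ (f := fun ζ' (_ : ζ' ∈ Set.range ξ) => (d x (y' ζ') : EReal))
            (z i0) (hz i0 hi0)


theorem stmt7 (X : Set (Fin n → ℝ)) (hX : Convex ℝ X)
    (G : (Fin n → ℝ) → Fin m → ℝ) (b : (Fin mM → ℝ) → Fin m → ℝ)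
    (hG : ∀ i, ConvexOn ℝ Set.univ (fun x => G x i))
    (hb : ∀ i, ConcaveOn ℝ Set.univ (fun ξ => b ξ i))
    (f : (Fin n → ℝ) → (Fin mM → ℝ) → ℝ)
    (hf : QuasiconvexOn ℝ Set.univ (fun p : (Fin n → ℝ) × (Fin mM → ℝ) => f p.1 p.2))
    (d : (Fin n → ℝ) → (Fin n → ℝ) → ℝ)
    -- `d` is a metric on `ℝ^n`:
    (hd_self : ∀ x y, d x y = 0 ↔ x = y)
    (hd_symm : ∀ x y, d x y = d y x)
    (hd_triangle : ∀ x y z, d x z ≤ d x y + d y z)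
    -- quasiconvexity of the recovery costs in the second argument:
    (hd_qc : ∀ x, QuasiconvexOn ℝ Set.univ (d x))
    {N : ℕ} (ξ : Fin N → (Fin mM → ℝ)) :
    ∀ x ∈ X, (RecoverableRobust X f G b d (convexHull ℝ (Set.range ξ)) x ↔
      RecoverableRobust X f G b d (Set.range ξ) x) := by
  intro x hx
  set U' : Set (Fin mM → ℝ) := Set.range ξ with hU'
  set U : Set (Fin mM → ℝ) := convexHull ℝ (Set.range ξ) with hU
  have hsub : U' ⊆ U := subset_convexHull ℝ _
  -- monotonicity of the objectives under restriction
  have hmonf : ∀ y, fObj f U' y ≤ fObj f U y := by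
    intro y
    exact biSup_mono (fun ζ hζ => hsub hζ)
  have hmonr : ∀ x' y, rObj d U' x' y ≤ rObj d U x' y := by
    intro x' y
    exact biSup_mono (fun ζ hζ => hsub hζ)
  -- restriction of feasible solutions
  have RES : ∀ x' y, RecFeasible X G b U x' y → RecFeasible X G b U' x' y :=
    fun x' y h => ⟨h.1, fun ζ hζ => h.2 ζ (hsub hζ)⟩
  -- extension of feasible solutions, with no worse objective values
  have EXT : ∀ x' (y' : (Fin mM → ℝ) → Fin n → ℝ), RecFeasible X G b U' x' y' →
      ∃ y, RecFeasible X G b U x' y ∧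
        fObj f U y ≤ fObj f U' y' ∧ rObj d U x' y ≤ rObj d U' x' y' := by
    intro x' y' hfe
    classical
    choose v hv1 hv2 hv3 hv4 using
      pointwise_ext X hX G b hG hb f hf d hd_qc ξ x' y' hfe.2
    refine ⟨fun ζ => if h : ζ ∈ U then v ζ h else x', ⟨hfe.1, ?_⟩, ?_, ?_⟩
    · intro ζ hζ
      simp only [dif_pos hζ]
      exact ⟨hv1 ζ hζ, hv2 ζ hζ⟩
    · refine iSup₂_le fun ζ hζ => ?_
      simp only [dif_pos hζ]
      exact hv3 ζ hζ
    · refine iSup₂_le fun ζ hζ => ?_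
      simp only [dif_pos hζ]
      exact hv4 ζ hζ
  constructor
  · rintro ⟨y, hfeas, hnd⟩
    refine ⟨y, RES x y hfeas, ?_⟩
    rintro ⟨x₂, y₂, hfe2, hf2, hr2, hstrict⟩
    obtain ⟨y₃, hfe3, hf3, hr3⟩ := EXT x₂ y₂ hfe2
    refine hnd ⟨x₂, y₃, hfe3, ?_, ?_, ?_⟩
    · exact hf3.trans (hf2.trans (hmonf y))
    · exact hr3.trans (hr2.trans (hmonr x y))
    · rcases hstrict with h | h
      · exact Or.inl (lt_of_le_of_lt hf3 (lt_of_lt_of_le h (hmonf y)))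
      · exact Or.inr (lt_of_le_of_lt hr3 (lt_of_lt_of_le h (hmonr x y)))
  · rintro ⟨y', hfeas', hnd'⟩
    obtain ⟨y, hfeY, hfY, hrY⟩ := EXT x y' hfeas'
    refine ⟨y, hfeY, ?_⟩
    rintro ⟨x₂, y₂, hfe2, hf2, hr2, hstrict⟩
    refine hnd' ⟨x₂, y₂, RES x₂ y₂ hfe2, ?_, ?_, ?_⟩
    · exact (hmonf y₂).trans (hf2.trans hfY)
    · exact (hmonr x₂ y₂).trans (hr2.trans hrY)
    · rcases hstrict with h | h
      · exact Or.inl (lt_of_le_of_lt (hmonf y₂) (lt_of_lt_of_le h hfY))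
      · exact Or.inr (lt_of_le_of_lt (hmonr x₂ y₂) (lt_of_lt_of_le h hrY))
end
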